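/- Let n ≥ 2 be an integer, let a : ℕ → ℕ be finitely supported and b ∈ ℕ with Σ_{j∈ℕ} a_j + b = n. Let d1 ≤ d2 be natural numbers with d2 − d1 ≥ 2·lg n, and set q = (d2 − d1)/(2·lg n). If Σ_{j ≤ d1} a_j ≥ 1 and Σ_{j ≥ d2} a_j + b ≥ 1, then there exists an integer d with d1 ≤ d ≤ d2 such that q·a_d ≤ Σ_{j < d} a_j and q·a_d ≤ Σ_{j > d} a_j + b. -/
import Mathlib
set_option maxHeartbeats 1000000

open Finset Real

private def Lf (a : ℕ →₀ ℕ) (d : ℕ) : ℕ := ∑ j ∈ Finset.range d, a j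
private def Rf (a : ℕ →₀ ℕ) (b d : ℕ) : ℕ := (∑ j ∈ a.support.filter fun j => d < j, a j) + b

private lemma Lf_eq_filter (a : ℕ →₀ ℕ) (d : ℕ) :
    Lf a d = ∑ j ∈ a.support.filter fun j => ¬ d ≤ j, a j := by
  classical
  refine (Finset.sum_subset ?_ ?_).symm
  · intro x hx
    simp only [Finset.mem_filter, not_le] at hx
    exact Finset.mem_range.2 hx.2
  · intro x hx hnx
    by_contra h
    have hxs : x ∈ a.support := Finsupp.mem_support_iff.2 h
    exact hnx (Finset.mem_filter.2 ⟨hxs, not_le.2 (Finset.mem_range.1 hx)⟩)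

private lemma LR_total (a : ℕ →₀ ℕ) (b n : ℕ) (htot : (∑ j ∈ a.support, a j) + b = n)
    (d : ℕ) : Lf a (d + 1) + Rf a b d = n := by
  classical
  have hsplit := Finset.sum_filter_add_sum_filter_not a.support (fun j => d < j) (fun j => a j)
  have hL : Lf a (d + 1) = ∑ j ∈ a.support.filter fun j => ¬ d < j, a j := by
    rw [Lf_eq_filter]
    congr 1
  rw [hL, Rf]
  omega

/-- the counting core of the ThinLayer algorithm. -/
theorem stmt3 (n : ℕ) (hn : 2 ≤ n) (a : ℕ →₀ ℕ) (b : ℕ)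
    (htot : (∑ j ∈ a.support, a j) + b = n)
    (d1 d2 : ℕ) (hd : d1 ≤ d2)
    (hgap : 2 * Real.logb 2 n ≤ (d2 : ℝ) - d1)
    (h1 : 1 ≤ ∑ j ∈ Finset.range (d1 + 1), a j)
    (h2 : 1 ≤ (∑ j ∈ a.support.filter fun j => d2 ≤ j, a j) + b) :
    ∃ d : ℕ, d1 ≤ d ∧ d ≤ d2 ∧
      ((d2 : ℝ) - d1) / (2 * Real.logb 2 n) * a d ≤ (∑ j ∈ Finset.range d, a j : ℕ) ∧
      ((d2 : ℝ) - d1) / (2 * Real.logb 2 n) * a d ≤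
        ((∑ j ∈ a.support.filter fun j => d < j, a j) + b : ℕ) := by
  classical
  by_contra hcon
  push_neg at hcon
  obtain ⟨q, hqdef⟩ : ∃ q : ℝ, q = ((d2 : ℝ) - d1) / (2 * Real.logb 2 n) := ⟨_, rfl⟩
  rw [← hqdef] at hcon
  -- basic real facts
  have hn0 : (0:ℝ) < n := by positivity
  have hn2 : (2:ℝ) ≤ n := by exact_mod_cast hn
  have hlg : 1 ≤ Real.logb 2 n := by
    have heq := Real.logb_self_eq_one (b := 2) (by norm_num)
    calc (1:ℝ) = Real.logb 2 2 := heq.symm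
    _ ≤ Real.logb 2 n := Real.logb_le_logb_of_le (by norm_num) (by norm_num) hn2
  have hlgpos : 0 < 2 * Real.logb 2 n := by linarith
  have hq1 : 1 ≤ q := by
    rw [hqdef, le_div_iff₀ hlgpos]
    linarith
  have hqpos : 0 < q := by linarith
  obtain ⟨Q, hQdef⟩ : ∃ Q : ℝ, Q = 1 + 1 / q := ⟨_, rfl⟩
  have hinvq : 0 < 1 / q := div_pos one_pos hqpos
  have hQ1 : 1 < Q := by rw [hQdef]; linarith
  have hQpos : 0 < Q := by linarith
  have hQ2 : Q ≤ 2 := by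
    have h : 1 / q ≤ 1 := by
      rw [div_le_one hqpos]; exact hq1
    rw [hQdef]; linarith
  -- Bernoulli: 2 ≤ Q ^ q (rpow)
  have hBern : (2:ℝ) ≤ Q ^ q := by
    have h := one_add_mul_self_le_rpow_one_add (s := 1/q) (by linarith) hq1
    rw [mul_one_div, div_self (ne_of_gt hqpos)] at h
    rw [hQdef]
    norm_num at h ⊢
    exact h
  have hd2gap : (d1 : ℝ) + 2 ≤ d2 := by linarith
  have hd2gapn : d1 + 2 ≤ d2 := by exact_mod_cast hd2gap
  -- main power inequality
  have hQn : (n:ℝ)^2 ≤ Q ^ (d2 - d1 : ℕ) := by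
    have hcast : ((d2 - d1 : ℕ) : ℝ) = (d2:ℝ) - d1 := by
      push_cast [Nat.cast_sub hd]; ring
    have hqe : (d2:ℝ) - d1 = q * (2 * Real.logb 2 n) := by
      rw [hqdef, div_mul_cancel₀ _ (ne_of_gt hlgpos)]
    calc (n:ℝ)^2 = ((2:ℝ) ^ Real.logb 2 n) ^ (2:ℕ) := by
            rw [Real.rpow_logb (by norm_num) (by norm_num) hn0]
      _ = (2:ℝ) ^ (Real.logb 2 n * 2) := by
            rw [← Real.rpow_natCast ((2:ℝ) ^ Real.logb 2 n) 2, ← Real.rpow_mul (by norm_num)]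
            norm_num
      _ ≤ (Q ^ q) ^ (Real.logb 2 n * 2) := by
            apply Real.rpow_le_rpow (by norm_num) hBern
            nlinarith
      _ = Q ^ (q * (2 * Real.logb 2 n)) := by
            rw [← Real.rpow_mul (le_of_lt hQpos)]
            ring_nf
      _ = Q ^ ((d2 - d1 : ℕ) : ℝ) := by rw [hqe.symm, hcast]
      _ = Q ^ (d2 - d1 : ℕ) := Real.rpow_natCast Q (d2 - d1)
  -- the failure hypothesis in convenient form
  have hF : ∀ d, d1 ≤ d → d ≤ d2 → (Lf a d : ℝ) < q * a d ∨ (Rf a b d : ℝ) < q * a d := by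
    intro d hdl hdr
    by_cases hcase : q * a d ≤ (Lf a d : ℝ)
    · exact Or.inr (hcon d hdl hdr hcase)
    · exact Or.inl (lt_of_not_ge hcase)
  -- structural facts
  have hLR : ∀ d, Lf a (d + 1) + Rf a b d = n := LR_total a b n htot
  have hLstep : ∀ d, Lf a (d + 1) = Lf a d + a d := by
    intro d
    simpa [Lf] using Finset.sum_range_succ (fun j => a j) d
  have hLmono : ∀ x y, x ≤ y → Lf a x ≤ Lf a y := by
    intro x y hxy
    exact Finset.sum_le_sum_of_subset (Finset.range_subset_range.2 hxy)
  have hRanti : ∀ x y, x ≤ y → Rf a b y ≤ Rf a b x := by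
    intro x y hxy
    have h1 := hLR x
    have h2 := hLR y
    have h3 := hLmono (x+1) (y+1) (by omega)
    omega
  have hRstep : ∀ d, Rf a b d = a (d + 1) + Rf a b (d + 1) := by
    intro d
    have h1 := hLR d
    have h2 := hLR (d + 1)
    have h3 := hLstep (d + 1)
    omega
  have htot' : ∀ d, Lf a d + a d + Rf a b d = n := by
    intro d
    have h1 := hLR d
    have h2 := hLstep d
    omega
  have hLn : ∀ d, Lf a d ≤ n := fun d => by have := htot' d; omega
  have h1' : 1 ≤ Lf a (d1 + 1) := h1
  have h2' : 1 ≤ Rf a b (d2 - 1) := by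
    have hfe : a.support.filter (fun j => d2 - 1 < j) = a.support.filter (fun j => d2 ≤ j) := by
      ext x
      simp only [Finset.mem_filter, and_congr_right_iff]
      intro _
      omega
    show 1 ≤ (∑ j ∈ a.support.filter fun j => d2 - 1 < j, a j) + b
    rw [hfe]
    exact h2
  -- the crossing point
  have hcex : ∃ m, d2 + 1 ≤ m ∨ (d1 ≤ m ∧ Rf a b m ≤ Lf a m) := ⟨d2 + 1, Or.inl le_rfl⟩
  obtain ⟨c, hcP, hcmin, hcle⟩ :
      ∃ c, (d2 + 1 ≤ c ∨ (d1 ≤ c ∧ Rf a b c ≤ Lf a c)) ∧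
        (∀ m, m < c → ¬(d2 + 1 ≤ m ∨ (d1 ≤ m ∧ Rf a b m ≤ Lf a m))) ∧ c ≤ d2 + 1 :=
    ⟨Nat.find hcex, Nat.find_spec hcex, fun m hm => Nat.find_min hcex hm,
      Nat.find_le (Or.inl le_rfl)⟩
  clear hcex
  have hcd1 : d1 ≤ c := by rcases hcP with h | h; omega; exact h.1
  -- left chain
  have Lchain : ∀ k, d1 + 1 + k ≤ c → Q ^ k ≤ (Lf a (d1 + 1 + k) : ℝ) := by
    intro k
    induction k with
    | zero =>
      intro _
      simpa using (by exact_mod_cast h1' : (1:ℝ) ≤ (Lf a (d1 + 1) : ℝ))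
    | succ k ih =>
      intro hk
      have hk' : d1 + 1 + k ≤ c := by omega
      have ihk := ih hk'
      have hdc : d1 + 1 + k < c := by omega
      have hdd2 : d1 + 1 + k ≤ d2 := by omega
      have hnP := hcmin (d1 + 1 + k) hdc
      push_neg at hnP
      have hLltR : Lf a (d1 + 1 + k) < Rf a b (d1 + 1 + k) := hnP.2 (by omega)
      have hfail : (Lf a (d1 + 1 + k) : ℝ) < q * a (d1 + 1 + k) := by
        rcases hF (d1 + 1 + k) (by omega) hdd2 with h | h
        · exact h
        · have hc2 : (Lf a (d1 + 1 + k) : ℝ) < (Rf a b (d1 + 1 + k) : ℝ) := by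
            exact_mod_cast hLltR
          linarith
      have hdiv : (Lf a (d1 + 1 + k) : ℝ) * (1 / q) < a (d1 + 1 + k) := by
        rw [mul_one_div, div_lt_iff₀ hqpos]
        linarith [mul_comm q ((a (d1 + 1 + k) : ℝ))]
      have hLs : (Lf a (d1 + 1 + k + 1) : ℝ) = Lf a (d1 + 1 + k) + a (d1 + 1 + k) := by
        rw [hLstep (d1 + 1 + k)]; push_cast; ring
      have hQk : Q ^ (k + 1) ≤ Q * (Lf a (d1 + 1 + k) : ℝ) := by
        calc Q ^ (k+1) = Q * Q ^ k := by ring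
        _ ≤ Q * (Lf a (d1 + 1 + k) : ℝ) := mul_le_mul_of_nonneg_left ihk (le_of_lt hQpos)
      have hexp : Q * (Lf a (d1 + 1 + k) : ℝ)
          = Lf a (d1 + 1 + k) + (Lf a (d1 + 1 + k) : ℝ) * (1 / q) := by
        rw [hQdef]; ring
      show Q ^ (k + 1) ≤ (Lf a (d1 + 1 + (k + 1)) : ℝ)
      rw [show d1 + 1 + (k + 1) = d1 + 1 + k + 1 from by omega, hLs]
      rw [hexp] at hQk
      linarith
  -- case split on c
  by_cases hc : c ≤ d2
  · -- crossing inside the window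
    have hRLc : Rf a b c ≤ Lf a c := by
      rcases hcP with h | h; omega; exact h.2
    -- right chain
    have Rchain : ∀ k, c + k ≤ d2 - 1 → Q ^ k ≤ (Rf a b (d2 - 1 - k) : ℝ) := by
      intro k
      induction k with
      | zero =>
        intro _
        simpa using (by exact_mod_cast h2' : (1:ℝ) ≤ (Rf a b (d2 - 1) : ℝ))
      | succ k ih =>
        intro hk
        have hk' : c + k ≤ d2 - 1 := by omega
        have ihk := ih hk'
        obtain ⟨d, hdeq⟩ : ∃ d, d = d2 - 1 - k := ⟨_, rfl⟩
        rw [← hdeq] at ihk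
        have hdc : c + 1 ≤ d := by omega
        have hdd2 : d ≤ d2 := by omega
        have hRLd : Rf a b d ≤ Lf a d := by
          have h3 := hRanti c d (by omega)
          have h4 := hLmono c d (by omega)
          omega
        have hfail : (Rf a b d : ℝ) < q * a d := by
          rcases hF d (by omega) hdd2 with h | h
          · have hc2 : (Rf a b d : ℝ) ≤ (Lf a d : ℝ) := by exact_mod_cast hRLd
            linarith
          · exact h
        have hstepR : (Rf a b (d - 1) : ℝ) = a d + Rf a b d := by
          have h5 := hRstep (d - 1)
          rw [show d - 1 + 1 = d from by omega] at h5
          rw [h5]; push_cast; ring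
        have hdiv : (Rf a b d : ℝ) * (1 / q) < a d := by
          rw [mul_one_div, div_lt_iff₀ hqpos]
          linarith [mul_comm q ((a d : ℝ))]
        have hQk : Q ^ (k + 1) ≤ Q * (Rf a b d : ℝ) := by
          calc Q ^ (k+1) = Q * Q ^ k := by ring
          _ ≤ Q * (Rf a b d : ℝ) := mul_le_mul_of_nonneg_left ihk (le_of_lt hQpos)
        have hexp : Q * (Rf a b d : ℝ) = Rf a b d + (Rf a b d : ℝ) * (1 / q) := by
          rw [hQdef]; ring
        rw [show d2 - 1 - (k + 1) = d - 1 from by omega, hstepR]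
        rw [hexp] at hQk
        linarith
    -- failure at c itself gives strictness
    have hfailc : (Rf a b c : ℝ) < q * a c := by
      rcases hF c hcd1 hc with h | h
      · have hc2 : (Rf a b c : ℝ) ≤ (Lf a c : ℝ) := by exact_mod_cast hRLc
        linarith
      · exact h
    have hmain : (Lf a c : ℝ) + Q * Rf a b c < n := by
      have hdiv : (Rf a b c : ℝ) * (1 / q) < a c := by
        rw [mul_one_div, div_lt_iff₀ hqpos]
        linarith [mul_comm q ((a c : ℝ))]
      have heq : ((Lf a c : ℝ)) + a c + Rf a b c = n := by
        exact_mod_cast htot' c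
      have hexp : Q * (Rf a b c : ℝ) = Rf a b c + (Rf a b c : ℝ) * (1 / q) := by
        rw [hQdef]; ring
      rw [hexp]
      linarith
    by_cases hc1 : d1 + 1 ≤ c
    · have hLc : Q ^ (c - d1 - 1) ≤ (Lf a c : ℝ) := by
        have h := Lchain (c - d1 - 1) (by omega)
        rwa [show d1 + 1 + (c - d1 - 1) = c from by omega] at h
      by_cases hc2 : c + 1 ≤ d2
      · -- middle case (kept)
        have hRc : Q ^ (d2 - 1 - c) ≤ (Rf a b c : ℝ) := by
          have h := Rchain (d2 - 1 - c) (by omega)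
          rwa [show d2 - 1 - (d2 - 1 - c) = c from by omega] at h
        have hApos : (0:ℝ) < Q ^ (c - d1 - 1) := pow_pos hQpos _
        have hBpos : (0:ℝ) < Q ^ (d2 - 1 - c) := pow_pos hQpos _
        have hprod : Q ^ (c - d1 - 1) * (Q ^ (d2 - 1 - c) * Q) = Q ^ (d2 - d1 - 1 : ℕ) := by
          have he : c - d1 - 1 + (d2 - 1 - c + 1) = d2 - d1 - 1 := by omega
          rw [← pow_succ, ← pow_add, he]
        have hpow2 : Q ^ (d2 - d1 - 1 : ℕ) * Q = Q ^ (d2 - d1 : ℕ) := by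
          have he : d2 - d1 - 1 + 1 = d2 - d1 := by omega
          rw [← pow_succ, he]
        have hZpos : (0:ℝ) < Q ^ (d2 - d1 - 1 : ℕ) := pow_pos hQpos _
        have hZQ : Q ^ (d2 - d1 - 1 : ℕ) * Q ≤ Q ^ (d2 - d1 - 1 : ℕ) * 2 :=
          mul_le_mul_of_nonneg_left hQ2 (le_of_lt hZpos)
        have hBQ : Q ^ (d2 - 1 - c) * Q ≤ Q * Rf a b c := by
          rw [mul_comm]
          exact mul_le_mul_of_nonneg_left hRc (le_of_lt hQpos)
        have hsum : Q ^ (c - d1 - 1) + Q ^ (d2 - 1 - c) * Q < (n:ℝ) := by linarith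
        have h0 : (0:ℝ) ≤ Q ^ (c - d1 - 1) + Q ^ (d2 - 1 - c) * Q := by
          have := mul_pos hBpos hQpos
          linarith
        have hsq : (Q ^ (c - d1 - 1) + Q ^ (d2 - 1 - c) * Q) ^ 2 < (n:ℝ) ^ 2 := by
          nlinarith [hsum, h0, hn0]
        have hge : 4 * Q ^ (d2 - d1 - 1 : ℕ) ≤
            (Q ^ (c - d1 - 1) + Q ^ (d2 - 1 - c) * Q) ^ 2 := by
          nlinarith [sq_nonneg (Q ^ (c - d1 - 1) - Q ^ (d2 - 1 - c) * Q), hprod]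
        -- n^2 ≤ Q^{d2-d1} = Z*Q ≤ 2Z and 4Z < n^2
        linarith [hQn, hpow2 ▸ hZQ]
      · -- c = d2
        have hQRpos : (0:ℝ) ≤ Q * (Rf a b c : ℝ) :=
          mul_nonneg (le_of_lt hQpos) (Nat.cast_nonneg _)
        have hLc2 : Q ^ (d2 - d1 - 1) ≤ (Lf a c : ℝ) := by
          rwa [show c - d1 - 1 = d2 - d1 - 1 from by omega] at hLc
        have hpow : Q ^ (d2 - d1 - 1) * Q = Q ^ (d2 - d1 : ℕ) := by
          have he : d2 - d1 - 1 + 1 = d2 - d1 := by omega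
          rw [← pow_succ, he]
        have hxn : Q ^ (d2 - d1 - 1) < (n:ℝ) := by linarith
        have hmul : Q ^ (d2 - d1 - 1) * Q < (n:ℝ) * Q :=
          mul_lt_mul_of_pos_right hxn hQpos
        have hnq : (n:ℝ) * Q ≤ n * 2 := mul_le_mul_of_nonneg_left hQ2 (le_of_lt hn0)
        have hmul' : Q ^ (d2 - d1 : ℕ) < (n:ℝ) * Q := hpow ▸ hmul
        have h2n : 2 * (n:ℝ) ≤ (n:ℝ) ^ 2 := by nlinarith [hn2, hn0]
        linarith
    · -- c = d1
      have hceq : c = d1 := by omega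
      have hRc : Q ^ (d2 - 1 - c) ≤ (Rf a b c : ℝ) := by
        have h := Rchain (d2 - 1 - c) (by omega)
        rwa [show d2 - 1 - (d2 - 1 - c) = c from by omega] at h
      have hpow : Q ^ (d2 - 1 - c) * Q = Q ^ (d2 - d1 : ℕ) := by
        have he : d2 - 1 - c + 1 = d2 - d1 := by omega
        rw [← pow_succ, he]
      have hQR : Q ^ (d2 - d1 : ℕ) ≤ Q * Rf a b c := by
        rw [← hpow, mul_comm]
        exact mul_le_mul_of_nonneg_left hRc (le_of_lt hQpos)
      have hLpos : (0:ℝ) ≤ Lf a c := Nat.cast_nonneg _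
      have h2n : 2 * (n:ℝ) ≤ (n:ℝ) ^ 2 := by nlinarith [hn2, hn0]
      linarith
  · -- c = d2 + 1 : no crossing, left chain all the way
    have hceq : c = d2 + 1 := by omega
    have hLc : Q ^ (d2 - d1) ≤ (Lf a (d2 + 1) : ℝ) := by
      have h := Lchain (d2 - d1) (by omega)
      rwa [show d1 + 1 + (d2 - d1) = d2 + 1 from by omega] at h
    have hLn' : (Lf a (d2 + 1) : ℝ) ≤ n := by exact_mod_cast hLn (d2 + 1)
    have h2n : 2 * (n:ℝ) ≤ (n:ℝ) ^ 2 := by nlinarith [hn2, hn0]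
    linarith
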